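/- Let ρ̃ be a density matrix with trace distance at most ε from ρ = |0⟩⟨0|_A ⊗ (1/2^b) I_B, and partition the n = a+b qubits into C and D. For any unitary U, the probability that measuring register C of U ρ̃ U† in the computational basis leaves a post-measurement state on D within trace distance ε' of a fixed pure state is at most (2^{a−d} + 2ε)/(1 − 2ε'), assuming ε' < 1/2. -/

import Mathlib

open Matrix BigOperators Kronecker
open scoped Classical ComplexOrder

noncomputable section

def ptraceFst {C D : Type*} [Fintype C] (σ : Matrix (C × D) (C × D) ℂ) :
    Matrix D D ℂ := Matrix.of fun y y' => ∑ j : C, σ (j, y) (j, y')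

def ptraceSnd {C D : Type*} [Fintype D] (σ : Matrix (C × D) (C × D) ℂ) :
    Matrix C C ℂ := Matrix.of fun x x' => ∑ j : D, σ (x, j) (x', j)

def traceNorm {n : Type*} [Fintype n] [DecidableEq n] (M : Matrix n n ℂ) : ℝ :=
  ((Matrix.posSemidef_conjTranspose_mul_self M).1.eigenvectorUnitary.1 *
    Matrix.diagonal (((↑) : ℝ → ℂ) ∘ (Real.sqrt ·) ∘ (Matrix.posSemidef_conjTranspose_mul_self M).1.eigenvalues) *
    (star (Matrix.posSemidef_conjTranspose_mul_self M).1.eigenvectorUnitary : Matrix n n ℂ)).trace.re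

def traceDist {n : Type*} [Fintype n] [DecidableEq n] (σ σ' : Matrix n n ℂ) : ℝ :=
  traceNorm (σ - σ') / 2

def IsDensity {n : Type*} [Fintype n] (M : Matrix n n ℂ) : Prop :=
  M.PosSemidef ∧ M.trace = 1

def IsPure {n : Type*} [Fintype n] (σ : Matrix n n ℂ) : Prop :=
  ∃ ψ : n → ℂ, (∑ i, Complex.normSq (ψ i)) = 1 ∧ σ = Matrix.vecMulVec ψ (star ψ)

def inputState (a b : ℕ) :
    Matrix (Fin (2^a) × Fin (2^b)) (Fin (2^a) × Fin (2^b)) ℂ :=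
  (Matrix.single 0 0 1) ⊗ₖ (((2:ℂ)^b)⁻¹ • (1 : Matrix (Fin (2^b)) (Fin (2^b)) ℂ))

def measSub {C D : Type*} [Fintype C] [Fintype D] (σ : Matrix (C × D) (C × D) ℂ) (j : C) :
    Matrix D D ℂ := Matrix.of fun y y' => σ (j, y) (j, y')

def measProb {C D : Type*} [Fintype C] [Fintype D] (σ : Matrix (C × D) (C × D) ℂ) (j : C) : ℝ :=
  ((measSub σ j).trace).re

def gibbs {n : Type*} [Fintype n] [DecidableEq n] (β : ℝ) {H : Matrix n n ℂ}
    (hH : H.IsHermitian) : Matrix n n ℂ :=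
  ((hH.cfc (fun x => Real.exp (-β * x))).trace)⁻¹ • hH.cfc (fun x => Real.exp (-β * x))

def vNEntropy {n : Type*} [Fintype n] [DecidableEq n] (M : Matrix n n ℂ) : ℝ :=
  if h : M.IsHermitian then -∑ i, (h.eigenvalues i) * Real.logb 2 (h.eigenvalues i) else 0

def iterState (n : ℕ) (U : ℕ → Matrix (Fin 2 × Fin (2^n)) (Fin 2 × Fin (2^n)) ℂ) :
    ℕ → Matrix (Fin (2^n)) (Fin (2^n)) ℂ
  | 0 => ((2:ℂ)^n)⁻¹ • 1
  | k+1 => ptraceFst (U k * ((Matrix.single 0 0 1) ⊗ₖ iterState n U k) * (U k)ᴴ)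

def Matrix.PosSemidef.sqrt {n : Type*} [Fintype n] [DecidableEq n] {A : Matrix n n ℂ}
    (hA : A.PosSemidef) : Matrix n n ℂ :=
  hA.1.eigenvectorUnitary.1 * Matrix.diagonal (((↑) : ℝ → ℂ) ∘ (Real.sqrt ·) ∘ hA.1.eigenvalues) *
    (star hA.1.eigenvectorUnitary : Matrix n n ℂ)

lemma traceNorm_eq_sqrt {n : Type*} [Fintype n] [DecidableEq n] (M : Matrix n n ℂ) :
    traceNorm M = ((Matrix.posSemidef_conjTranspose_mul_self M).sqrt).trace.re := rfl

open scoped MatrixOrder in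
lemma Matrix.PosSemidef.sqrt_eq_cfc {n : Type*} [Fintype n] [DecidableEq n] {A : Matrix n n ℂ}
    (hA : A.PosSemidef) : hA.sqrt = CFC.sqrt A := by
  rw [CFC.sqrt_eq_real_sqrt A hA.nonneg, cfcₙ_eq_cfc, hA.1.cfc_eq, Matrix.IsHermitian.cfc]
  rfl

open scoped MatrixOrder in
lemma Matrix.PosSemidef.posSemidef_sqrt {n : Type*} [Fintype n] [DecidableEq n]
    {A : Matrix n n ℂ} (hA : A.PosSemidef) : hA.sqrt.PosSemidef := by
  rw [hA.sqrt_eq_cfc]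
  exact (CFC.sqrt_nonneg A).posSemidef

open scoped MatrixOrder in
lemma Matrix.PosSemidef.sqrt_mul_self {n : Type*} [Fintype n] [DecidableEq n]
    {A : Matrix n n ℂ} (hA : A.PosSemidef) : hA.sqrt * hA.sqrt = A := by
  rw [hA.sqrt_eq_cfc]
  exact CFC.sqrt_mul_sqrt_self A hA.nonneg

open scoped MatrixOrder in
lemma Matrix.PosSemidef.eq_sqrt_of_sq_eq {n : Type*} [Fintype n] [DecidableEq n]
    {A : Matrix n n ℂ} (hA : A.PosSemidef) {B : Matrix n n ℂ} (hB : B.PosSemidef)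
    (hAB : A ^ 2 = B) : A = hB.sqrt := by
  rw [hB.sqrt_eq_cfc, eq_comm, CFC.sqrt_eq_iff _ _ hB.nonneg hA.nonneg, ← sq]
  exact hAB

namespace QProof

variable {n : Type*} [Fintype n] [DecidableEq n]

lemma star_mul_self_eigU {X : Matrix n n ℂ} (hX : X.IsHermitian) :
    (star (hX.eigenvectorUnitary : Matrix n n ℂ)) * hX.eigenvectorUnitary = 1 :=
  Unitary.star_mul_self_of_mem (hX.eigenvectorUnitary).2

lemma cfc_mul {X : Matrix n n ℂ} (hX : X.IsHermitian) (f g : ℝ → ℝ) :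
    hX.cfc f * hX.cfc g = hX.cfc (fun x => f x * g x) := by
  unfold Matrix.IsHermitian.cfc
  simp only [Unitary.conjStarAlgAut_apply]
  have h1 := star_mul_self_eigU hX
  calc (hX.eigenvectorUnitary : Matrix n n ℂ) * diagonal (Complex.ofReal ∘ f ∘ hX.eigenvalues) *
      star (hX.eigenvectorUnitary : Matrix n n ℂ) *
      ((hX.eigenvectorUnitary : Matrix n n ℂ) * diagonal (Complex.ofReal ∘ g ∘ hX.eigenvalues) *
      star (hX.eigenvectorUnitary : Matrix n n ℂ))
      = (hX.eigenvectorUnitary : Matrix n n ℂ) * (diagonal (Complex.ofReal ∘ f ∘ hX.eigenvalues) *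
        ((star (hX.eigenvectorUnitary : Matrix n n ℂ) * (hX.eigenvectorUnitary : Matrix n n ℂ)) *
        diagonal (Complex.ofReal ∘ g ∘ hX.eigenvalues))) *
        star (hX.eigenvectorUnitary : Matrix n n ℂ) := by
        simp only [mul_assoc]
    _ = _ := by
        rw [h1, one_mul, diagonal_mul_diagonal]
        congr 2
        ext i j
        simp [diagonal_apply, Function.comp]

lemma cfc_add {X : Matrix n n ℂ} (hX : X.IsHermitian) (f g : ℝ → ℝ) :
    hX.cfc f + hX.cfc g = hX.cfc (fun x => f x + g x) := by
  unfold Matrix.IsHermitian.cfc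
  simp only [Unitary.conjStarAlgAut_apply]
  rw [← add_mul, ← mul_add, diagonal_add]
  congr 2
  ext i j; simp [diagonal_apply, Function.comp]

lemma cfc_id' {X : Matrix n n ℂ} (hX : X.IsHermitian) : hX.cfc (fun x => x) = X := by
  unfold Matrix.IsHermitian.cfc
  exact (hX.spectral_theorem).symm

lemma cfc_trace {X : Matrix n n ℂ} (hX : X.IsHermitian) (f : ℝ → ℝ) :
    (hX.cfc f).trace = ∑ i, (f (hX.eigenvalues i) : ℂ) := by
  unfold Matrix.IsHermitian.cfc
  simp only [Unitary.conjStarAlgAut_apply]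
  rw [trace_mul_cycle, star_mul_self_eigU hX, one_mul]
  rw [trace_diagonal]
  simp [Function.comp]

lemma cfc_posSemidef {X : Matrix n n ℂ} (hX : X.IsHermitian) {f : ℝ → ℝ}
    (hf : ∀ x, 0 ≤ f x) : (hX.cfc f).PosSemidef := by
  unfold Matrix.IsHermitian.cfc
  simp only [Unitary.conjStarAlgAut_apply, Matrix.star_eq_conjTranspose]
  have hd : (diagonal (Complex.ofReal ∘ f ∘ hX.eigenvalues)).PosSemidef := by
    refine Matrix.PosSemidef.diagonal fun i => ?_
    simpa using Complex.zero_le_real.2 (hf _)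
  simpa using hd.mul_mul_conjTranspose_same (hX.eigenvectorUnitary : Matrix n n ℂ)




variable {n : Type*} [Fintype n] [DecidableEq n]

lemma trace_re_nonneg {A : Matrix n n ℂ} (hA : A.PosSemidef) : 0 ≤ A.trace.re := by
  have : A.trace = ∑ i, (hA.1.eigenvalues i : ℂ) := by
    conv_lhs => rw [← QProof.cfc_id' hA.1]
    exact QProof.cfc_trace hA.1 _
  rw [this]
  rw [Complex.re_sum]
  exact Finset.sum_nonneg fun i _ => by simpa using hA.eigenvalues_nonneg i

lemma trace_re_mul_nonneg {A B : Matrix n n ℂ} (hA : A.PosSemidef) (hB : B.PosSemidef) :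
    0 ≤ (A * B).trace.re := by
  have h : (A * B).trace = (hA.sqrt * B * hA.sqrtᴴ).trace := by
    calc (A * B).trace = (hA.sqrt * (hA.sqrt * B)).trace := by
          rw [← Matrix.mul_assoc, hA.sqrt_mul_self]
      _ = ((hA.sqrt * B) * hA.sqrt).trace := trace_mul_comm _ _
      _ = (hA.sqrt * B * hA.sqrtᴴ).trace := by rw [hA.posSemidef_sqrt.isHermitian]
  rw [h]
  exact trace_re_nonneg (hB.mul_mul_conjTranspose_same hA.sqrt)

lemma trace_re_mul_le {A M : Matrix n n ℂ} (hA : A.PosSemidef) (hM : M.PosSemidef)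
    (h1M : (1 - M).PosSemidef) : (A * M).trace.re ≤ A.trace.re := by
  have h0 := trace_re_mul_nonneg hA h1M
  have : A * (1 - M) = A - A * M := by rw [Matrix.mul_sub, Matrix.mul_one]
  rw [this, trace_sub, Complex.sub_re] at h0
  linarith

lemma traceNorm_hermitian {X : Matrix n n ℂ} (hX : X.IsHermitian) :
    traceNorm X = ∑ i, |hX.eigenvalues i| := by
  have hsq : (hX.cfc (fun x => |x|)) ^ 2 = Xᴴ * X := by
    rw [pow_two, QProof.cfc_mul]
    have : (fun x : ℝ => |x| * |x|) = fun x => x * x := by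
      funext x; exact abs_mul_abs_self x
    rw [this, hX.eq]
    conv_rhs => rw [← QProof.cfc_id' hX, QProof.cfc_mul]
  have hs := (QProof.cfc_posSemidef hX (fun x => abs_nonneg x)).eq_sqrt_of_sq_eq
    (Matrix.posSemidef_conjTranspose_mul_self X) hsq
  rw [traceNorm_eq_sqrt, ← hs, QProof.cfc_trace, Complex.re_sum]
  simp

lemma abs_trace_re_mul_le {X M : Matrix n n ℂ} (hX : X.IsHermitian) (hM : M.PosSemidef)
    (h1M : (1 - M).PosSemidef) : |((X * M).trace).re| ≤ traceNorm X := by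
  set P := hX.cfc (fun x => max x 0) with hPdef
  set N := hX.cfc (fun x => max (-x) 0) with hNdef
  have hP : P.PosSemidef := QProof.cfc_posSemidef hX fun x => le_max_right x 0
  have hN : N.PosSemidef := QProof.cfc_posSemidef hX fun x => le_max_right (-x) 0
  have hXPN : X = P - N := by
    rw [eq_sub_iff_add_eq]
    have h1 := QProof.cfc_add hX (fun x => x) (fun x => max (-x) 0)
    rw [QProof.cfc_id' hX] at h1
    have h2 : (fun x : ℝ => x + max (-x) 0) = fun x => max x 0 := by
      funext x
      rcases le_total 0 x with h | h
      · rw [max_eq_left h, max_eq_right (by linarith)]; ring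
      · rw [max_eq_right h, max_eq_left (by linarith)]; ring
    rw [h2] at h1
    rw [hPdef, hNdef, h1]
  have htn : traceNorm X = P.trace.re + N.trace.re := by
    rw [traceNorm_hermitian hX, hPdef, hNdef, QProof.cfc_trace, QProof.cfc_trace,
      Complex.re_sum, Complex.re_sum, ← Finset.sum_add_distrib]
    congr 1; funext i
    simp only [Complex.ofReal_re]
    rcases le_total 0 (hX.eigenvalues i) with h | h
    · rw [abs_of_nonneg h, max_eq_left h, max_eq_right (by linarith)]; ring
    · rw [abs_of_nonpos h, max_eq_right h, max_eq_left (by linarith)]; ring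
  have hre : ((X * M).trace).re = ((P * M).trace).re - ((N * M).trace).re := by
    rw [hXPN, Matrix.sub_mul, trace_sub, Complex.sub_re]
  rw [htn, hre]
  have b1 := trace_re_mul_nonneg hP hM
  have b2 := trace_re_mul_le hP hM h1M
  have b3 := trace_re_mul_nonneg hN hM
  have b4 := trace_re_mul_le hN hM h1M
  rw [abs_le]
  constructor <;> linarith

variable {n : Type*} [Fintype n] [DecidableEq n]

lemma traceNorm_conj_unitary {U : Matrix n n ℂ} (X : Matrix n n ℂ)
    (hU : U ∈ Matrix.unitaryGroup n ℂ) :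
    traceNorm (U * X * Uᴴ) = traceNorm X := by
  have hsU : Uᴴ * U = 1 := by
    have := Unitary.star_mul_self_of_mem hU
    rwa [Matrix.star_eq_conjTranspose] at this
  set s := (Matrix.posSemidef_conjTranspose_mul_self X).sqrt with hs
  have hsP := (Matrix.posSemidef_conjTranspose_mul_self X).posSemidef_sqrt
  have hBP : (U * s * Uᴴ).PosSemidef := hsP.mul_mul_conjTranspose_same U
  have hsq : (U * s * Uᴴ) ^ 2 = (U * X * Uᴴ)ᴴ * (U * X * Uᴴ) := by
    have h2 : (U * X * Uᴴ)ᴴ = U * Xᴴ * Uᴴ := by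
      simp [conjTranspose_mul, Matrix.mul_assoc]
    rw [pow_two, h2]
    calc (U * s * Uᴴ) * (U * s * Uᴴ)
        = U * (s * ((Uᴴ * U) * (s * Uᴴ))) := by simp only [Matrix.mul_assoc]
      _ = U * (s * (s * Uᴴ)) := by rw [hsU, Matrix.one_mul]
      _ = U * s * s * Uᴴ := by simp only [Matrix.mul_assoc]
      _ = U * (Xᴴ * X) * Uᴴ := by
          rw [Matrix.mul_assoc U s s, (Matrix.posSemidef_conjTranspose_mul_self X).sqrt_mul_self]
      _ = (U * Xᴴ * Uᴴ) * (U * X * Uᴴ) := by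
          calc U * (Xᴴ * X) * Uᴴ = U * (Xᴴ * ((Uᴴ * U) * (X * Uᴴ))) := by
                rw [hsU, Matrix.one_mul]; simp only [Matrix.mul_assoc]
            _ = (U * Xᴴ * Uᴴ) * (U * X * Uᴴ) := by simp only [Matrix.mul_assoc]
  have heq := hBP.eq_sqrt_of_sq_eq (Matrix.posSemidef_conjTranspose_mul_self (U * X * Uᴴ)) hsq
  rw [traceNorm_eq_sqrt, ← heq, traceNorm_eq_sqrt, ← hs]
  rw [trace_mul_cycle, hsU, Matrix.one_mul]

lemma traceNorm_submatrix {m : Type*} [Fintype m] [DecidableEq m] (X : Matrix n n ℂ)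
    (f : m ≃ n) : traceNorm (X.submatrix f f) = traceNorm X := by
  set s := (Matrix.posSemidef_conjTranspose_mul_self X).sqrt with hs
  have hsP := (Matrix.posSemidef_conjTranspose_mul_self X).posSemidef_sqrt
  have hBP : (s.submatrix f f).PosSemidef := hsP.submatrix f
  have hsq : (s.submatrix f f) ^ 2 = (X.submatrix f f)ᴴ * (X.submatrix f f) := by
    rw [pow_two, conjTranspose_submatrix, submatrix_mul_equiv, submatrix_mul_equiv,
      (Matrix.posSemidef_conjTranspose_mul_self X).sqrt_mul_self]
  have heq := hBP.eq_sqrt_of_sq_eq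
    (Matrix.posSemidef_conjTranspose_mul_self (X.submatrix f f)) hsq
  rw [traceNorm_eq_sqrt, ← heq, traceNorm_eq_sqrt, ← hs]
  congr 1
  exact Fintype.sum_equiv f _ _ fun i => rfl


variable {C D : Type*} [Fintype C] [Fintype D] [DecidableEq C] [DecidableEq D]

lemma conjTranspose_kron (A : Matrix C C ℂ) (B : Matrix D D ℂ) :
    (A ⊗ₖ B)ᴴ = Aᴴ ⊗ₖ Bᴴ := by
  ext ⟨i, j⟩ ⟨k, l⟩
  simp [conjTranspose_apply, kroneckerMap_apply, mul_comm]

lemma kron_posSemidef {A : Matrix C C ℂ} {B : Matrix D D ℂ}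
    (hA : A.PosSemidef) (hB : B.PosSemidef) : (A ⊗ₖ B).PosSemidef := by
  exact hA.kronecker hB

lemma vecMulVec_posSemidef (ψ : D → ℂ) : (Matrix.vecMulVec ψ (star ψ)).PosSemidef := by
  refine Matrix.PosSemidef.of_dotProduct_mulVec_nonneg ?_ ?_
  · ext i j
    simp [conjTranspose_apply, vecMulVec_apply, mul_comm]
  · intro v
    have h : dotProduct (star v) ((Matrix.vecMulVec ψ (star ψ)) *ᵥ v)
        = star (∑ j, star (ψ j) * v j) * (∑ j, star (ψ j) * v j) := by
      simp only [dotProduct, mulVec, vecMulVec_apply, Pi.star_apply, star_sum, star_mul',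
        star_star, Finset.sum_mul, Finset.mul_sum]
      rw [Finset.sum_comm]
      exact Finset.sum_congr rfl fun i _ => Finset.sum_congr rfl fun j _ => by ring
    rw [h]
    exact star_mul_self_nonneg _

lemma quad_vecMulVec (ψ v : D → ℂ) :
    dotProduct (star v) ((Matrix.vecMulVec ψ (star ψ)) *ᵥ v)
      = (Complex.normSq (∑ j, star (ψ j) * v j) : ℂ) := by
  have h : dotProduct (star v) ((Matrix.vecMulVec ψ (star ψ)) *ᵥ v)
      = star (∑ j, star (ψ j) * v j) * (∑ j, star (ψ j) * v j) := by
    simp only [dotProduct, mulVec, vecMulVec_apply, Pi.star_apply, star_sum, star_mul',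
      star_star, Finset.sum_mul, Finset.mul_sum]
    rw [Finset.sum_comm]
    exact Finset.sum_congr rfl fun i _ => Finset.sum_congr rfl fun j _ => by ring
  rw [h, Complex.star_def, mul_comm, Complex.mul_conj]

lemma normSq_sum_le (ψ v : D → ℂ) (hψ : (∑ i, Complex.normSq (ψ i)) = 1) :
    Complex.normSq (∑ j, star (ψ j) * v j) ≤ ∑ j, Complex.normSq (v j) := by
  have h1 : ‖∑ j, star (ψ j) * v j‖
      ≤ ∑ j, ‖ψ j‖ * ‖v j‖ := by
    refine (norm_sum_le _ _).trans ?_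
    refine Finset.sum_le_sum fun j _ => le_of_eq ?_
    rw [norm_mul]
    simp [Complex.star_def]
  have h2 : (∑ j, ‖ψ j‖ * ‖v j‖) ^ 2
      ≤ (∑ j, ‖ψ j‖ ^ 2) * ∑ j, ‖v j‖ ^ 2 :=
    Finset.sum_mul_sq_le_sq_mul_sq _ _ _
  have h3 : (∑ j, ‖ψ j‖ ^ 2) = 1 := by
    rw [← hψ]; exact Finset.sum_congr rfl fun j _ => Complex.sq_norm _
  calc Complex.normSq (∑ j, star (ψ j) * v j)
      = ‖∑ j, star (ψ j) * v j‖ ^ 2 := (Complex.sq_norm _).symm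
    _ ≤ (∑ j, ‖ψ j‖ * ‖v j‖) ^ 2 := by
        exact pow_le_pow_left₀ (norm_nonneg _) h1 2
    _ ≤ (∑ j, ‖ψ j‖ ^ 2) * ∑ j, ‖v j‖ ^ 2 := h2
    _ = ∑ j, Complex.normSq (v j) := by
        rw [h3, one_mul]
        exact Finset.sum_congr rfl fun j _ => Complex.sq_norm _

lemma one_sub_vecMulVec_posSemidef (ψ : D → ℂ) (hψ : (∑ i, Complex.normSq (ψ i)) = 1) :
    ((1 : Matrix D D ℂ) - Matrix.vecMulVec ψ (star ψ)).PosSemidef := by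
  refine Matrix.PosSemidef.of_dotProduct_mulVec_nonneg ?_ ?_
  · exact (Matrix.isHermitian_one).sub (vecMulVec_posSemidef ψ).1
  · intro v
    rw [Matrix.sub_mulVec, dotProduct_sub, quad_vecMulVec]
    have hv : dotProduct (star v) ((1 : Matrix D D ℂ) *ᵥ v)
        = ((∑ j, Complex.normSq (v j) : ℝ) : ℂ) := by
      simp only [Matrix.one_mulVec, dotProduct, Pi.star_apply, Complex.ofReal_sum]
      exact Finset.sum_congr rfl fun j _ => by
        rw [Complex.star_def, mul_comm, Complex.mul_conj]
    rw [hv, ← Complex.ofReal_sub]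
    rw [Complex.zero_le_real]
    have := normSq_sum_le ψ v hψ
    linarith

lemma trace_vecMulVec (ψ : D → ℂ) :
    (Matrix.vecMulVec ψ (star ψ)).trace = ((∑ i, Complex.normSq (ψ i) : ℝ) : ℂ) := by
  simp only [Matrix.trace, Matrix.diag, vecMulVec_apply, Pi.star_apply, Complex.ofReal_sum]
  exact Finset.sum_congr rfl fun j _ => (Complex.mul_conj _)

lemma vecMulVec_mul_self (ψ : D → ℂ) (hψ : (∑ i, Complex.normSq (ψ i)) = 1) :
    Matrix.vecMulVec ψ (star ψ) * Matrix.vecMulVec ψ (star ψ) = Matrix.vecMulVec ψ (star ψ) := by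
  ext i j
  simp only [Matrix.mul_apply, vecMulVec_apply, Pi.star_apply]
  have : ∀ k, ψ i * star (ψ k) * (ψ k * star (ψ j))
      = (Complex.normSq (ψ k) : ℂ) * (ψ i * star (ψ j)) := fun k => by
    rw [Complex.star_def, ← Complex.mul_conj]; ring
  rw [Finset.sum_congr rfl fun k _ => this k, ← Finset.sum_mul, ← Complex.ofReal_sum, hψ]
  simp

lemma stdBasis_eq_vecMulVec (x : C) :
    Matrix.single x x (1 : ℂ)
      = Matrix.vecMulVec (Pi.single x 1) (star (Pi.single x 1)) := by
  ext i j
  simp only [Matrix.single, Matrix.of_apply, vecMulVec_apply, Pi.star_apply,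
    Pi.single_apply]
  split_ifs <;> simp_all

lemma stdBasis_posSemidef (x : C) : (Matrix.single x x (1 : ℂ)).PosSemidef := by
  rw [stdBasis_eq_vecMulVec]; exact vecMulVec_posSemidef _

lemma measSub_posSemidef {σ : Matrix (C × D) (C × D) ℂ} (hσ : σ.PosSemidef) (j : C) :
    (measSub σ j).PosSemidef := by
  refine Matrix.PosSemidef.of_dotProduct_mulVec_nonneg ?_ ?_
  · ext y y'
    have h := congrFun (congrFun hσ.1 (j, y)) (j, y')
    simpa [conjTranspose_apply, measSub] using h
  · intro v
    have h : dotProduct (star fun p : C × D => if p.1 = j then v p.2 else 0)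
        (σ *ᵥ fun p : C × D => if p.1 = j then v p.2 else 0)
        = dotProduct (star v) ((measSub σ j) *ᵥ v) := by
      simp [dotProduct, mulVec, Fintype.sum_prod_type, measSub, apply_ite, ite_mul, mul_ite,
        mul_zero, zero_mul, Finset.sum_ite_eq', Finset.sum_ite_eq]
    rw [← h]
    exact hσ.dotProduct_mulVec_nonneg _

lemma trace_mul_kron_std (σ : Matrix (C × D) (C × D) ℂ) (x : C) (P : Matrix D D ℂ) :
    (σ * (Matrix.single x x (1 : ℂ) ⊗ₖ P)).trace = ((measSub σ x) * P).trace := by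
  simp only [Matrix.trace, Matrix.diag, Matrix.mul_apply, Fintype.sum_prod_type,
    kroneckerMap_apply, Matrix.single, Matrix.of_apply, measSub,
    ite_mul, one_mul, zero_mul, mul_ite, mul_zero, mul_one]
  simp only [ite_and]
  simp [Finset.sum_ite_eq, Finset.sum_ite_eq']

lemma sum_std_kron_one :
    (∑ x : C, Matrix.single x x (1 : ℂ) ⊗ₖ (1 : Matrix D D ℂ)) = 1 := by
  ext ⟨i, j⟩ ⟨k, l⟩
  simp only [Matrix.sum_apply, kroneckerMap_apply, Matrix.single, Matrix.of_apply,
    Matrix.one_apply, ite_mul, one_mul, zero_mul, Prod.mk.injEq]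
  simp only [ite_and]
  by_cases hik : i = k
  · subst hik
    simp [Finset.sum_ite_eq]
  · rw [if_neg hik]
    exact Finset.sum_eq_zero fun x _ => by split_ifs <;> simp_all


variable {D : Type*} [Fintype D] [DecidableEq D]

lemma good_bound (m : Matrix D D ℂ) (hm : m.PosSemidef) (ψ : D → ℂ)
    (hψ : (∑ i, Complex.normSq (ψ i)) = 1) (ε' : ℝ)
    (hd : traceDist (((m.trace.re : ℝ) : ℂ)⁻¹ • m) (Matrix.vecMulVec ψ (star ψ)) ≤ ε') :
    m.trace.re * (1 - 2 * ε') ≤ (m * Matrix.vecMulVec ψ (star ψ)).trace.re := by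
  have hPpsd := vecMulVec_posSemidef ψ
  have h1P := one_sub_vecMulVec_posSemidef ψ hψ
  have hp0 : 0 ≤ m.trace.re := trace_re_nonneg hm
  rcases eq_or_lt_of_le hp0 with h0 | hp
  · rw [← h0, zero_mul]
    exact trace_re_mul_nonneg hm hPpsd
  · set p := m.trace.re with hpdef
    set P := Matrix.vecMulVec ψ (star ψ) with hPdef
    set t := (m * P).trace.re with htdef
    have hX : ((p : ℂ)⁻¹ • m - P).IsHermitian := by
      unfold Matrix.IsHermitian
      rw [conjTranspose_sub, conjTranspose_smul, hm.1, hPpsd.1]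
      congr 1
      rw [← Complex.ofReal_inv]
      simp [Complex.star_def, Complex.conj_ofReal]
    have hb := abs_trace_re_mul_le hX hPpsd h1P
    have htn : traceNorm ((p : ℂ)⁻¹ • m - P) ≤ 2 * ε' := by
      have h' : traceDist ((p : ℂ)⁻¹ • m) P = traceNorm ((p : ℂ)⁻¹ • m - P) / 2 := rfl
      rw [h'] at hd
      linarith
    have hXP : ((((p : ℂ)⁻¹ • m - P) * P).trace).re = p⁻¹ * t - 1 := by
      rw [Matrix.sub_mul, Matrix.smul_mul, trace_sub, trace_smul, vecMulVec_mul_self ψ hψ,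
        trace_vecMulVec, hψ]
      rw [Complex.sub_re, smul_eq_mul, ← Complex.ofReal_inv, Complex.re_ofReal_mul]
      simp [htdef]
    rw [hXP] at hb
    have h2 : 1 - 2 * ε' ≤ p⁻¹ * t := by
      have := (abs_le.1 (hb.trans htn)).1
      linarith
    calc p * (1 - 2 * ε') ≤ p * (p⁻¹ * t) := mul_le_mul_of_nonneg_left h2 (le_of_lt hp)
      _ = t := by field_simp




lemma smul_one_posSemidef {D : Type*} [Fintype D] [DecidableEq D] {r : ℝ} (hr : 0 ≤ r) :
    (((r : ℂ)) • (1 : Matrix D D ℂ)).PosSemidef := by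
  have h : ((r : ℂ)) • (1 : Matrix D D ℂ) = Matrix.diagonal (fun _ => (r : ℂ)) := by
    ext i j
    simp only [Matrix.smul_apply, Matrix.one_apply, Matrix.diagonal_apply, smul_eq_mul]
    split_ifs <;> simp
  rw [h]
  exact Matrix.PosSemidef.diagonal fun i => Complex.zero_le_real.2 hr

lemma single_normSq (a : ℕ) [NeZero a] :
    (∑ i : Fin a, Complex.normSq ((Pi.single 0 1 : Fin a → ℂ) i)) = 1 := by
  simp [Pi.single_apply, apply_ite, Finset.sum_ite_eq]

lemma inputState_posSemidef (a b : ℕ) : (inputState a b).PosSemidef := by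
  have h2 : ((2:ℂ)^b)⁻¹ = (((((2:ℝ)^b)⁻¹ : ℝ)) : ℂ) := by push_cast; ring
  refine kron_posSemidef (stdBasis_posSemidef 0) ?_
  rw [h2]
  exact smul_one_posSemidef (by positivity)

lemma inputState_bound (a b : ℕ) :
    ((((((2:ℝ)^b)⁻¹ : ℝ)) : ℂ) • (1 : Matrix (Fin (2^a) × Fin (2^b)) (Fin (2^a) × Fin (2^b)) ℂ)
      - inputState a b).PosSemidef := by
  have h2 : ((2:ℂ)^b)⁻¹ = (((((2:ℝ)^b)⁻¹ : ℝ)) : ℂ) := by push_cast; ring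
  have hsplit : ((((((2:ℝ)^b)⁻¹ : ℝ)) : ℂ) •
        (1 : Matrix (Fin (2^a) × Fin (2^b)) (Fin (2^a) × Fin (2^b)) ℂ) - inputState a b)
      = ((1 : Matrix (Fin (2^a)) (Fin (2^a)) ℂ) - Matrix.single 0 0 1) ⊗ₖ
        (((2:ℂ)^b)⁻¹ • (1 : Matrix (Fin (2^b)) (Fin (2^b)) ℂ)) := by
    ext ⟨x, y⟩ ⟨x', y'⟩
    rw [← h2]
    simp only [inputState, Matrix.sub_apply, Matrix.smul_apply, kroneckerMap_apply,
      Matrix.one_apply, Matrix.sub_apply, smul_eq_mul, mul_ite, mul_one, mul_zero,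
      Prod.mk.injEq, ite_and]
    split_ifs <;> ring
  rw [hsplit]
  refine kron_posSemidef ?_ ?_
  · rw [stdBasis_eq_vecMulVec]
    exact one_sub_vecMulVec_posSemidef _ (single_normSq (2^a))
  · rw [h2]; exact smul_one_posSemidef (by positivity)

lemma posSemidef_sum {n ι : Type*} [Fintype n] [DecidableEq n] (s : Finset ι)
    (f : ι → Matrix n n ℂ) (hf : ∀ i ∈ s, (f i).PosSemidef) :
    (∑ i ∈ s, f i).PosSemidef := by
  classical
  induction s using Finset.induction_on with
  | empty => simpa using Matrix.PosSemidef.zero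
  | insert _ _ hx ih =>
    rw [Finset.sum_insert hx]
    exact (hf _ (Finset.mem_insert_self _ _)).add
      (ih fun i hi => hf i (Finset.mem_insert_of_mem hi))

lemma trace_stdBasis {C : Type*} [Fintype C] [DecidableEq C] (x : C) :
    (Matrix.single x x (1:ℂ)).trace = 1 := by
  simp [Matrix.trace, Matrix.diag, Matrix.single, ite_and, Finset.sum_ite_eq]

end QProof

theorem stmt8 (a b c d : ℕ) (hn : a + b = c + d) (ε ε' : ℝ) (hε' : ε' < 1/2)
    (ρt : Matrix (Fin (2^a) × Fin (2^b)) (Fin (2^a) × Fin (2^b)) ℂ)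
    (hρt : IsDensity ρt) (hclose : traceDist ρt (inputState a b) ≤ ε)
    (e : (Fin (2^a) × Fin (2^b)) ≃ (Fin (2^c) × Fin (2^d)))
    (U : Matrix (Fin (2^c) × Fin (2^d)) (Fin (2^c) × Fin (2^d)) ℂ)
    (hU : U ∈ Matrix.unitaryGroup (Fin (2^c) × Fin (2^d)) ℂ)
    (ψ : Fin (2^d) → ℂ) (hψ : (∑ i, Complex.normSq (ψ i)) = 1) :
    (∑ j : Fin (2^c),
        if traceDist (((measProb (U * (Matrix.reindex e e ρt) * Uᴴ) j : ℂ))⁻¹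
              • measSub (U * (Matrix.reindex e e ρt) * Uᴴ) j)
            (Matrix.vecMulVec ψ (star ψ)) ≤ ε'
          then measProb (U * (Matrix.reindex e e ρt) * Uᴴ) j else 0)
      ≤ ((2:ℝ)^((a:ℤ) - d) + 2 * ε) / (1 - 2 * ε') := by
  classical
  set W := U * (Matrix.reindex e e ρt) * Uᴴ with hW
  set P := Matrix.vecMulVec ψ (star ψ) with hPdef
  set G : Finset (Fin (2^c)) := Finset.univ.filter
    (fun j => traceDist (((measProb W j : ℝ) : ℂ)⁻¹ • measSub W j) P ≤ ε') with hG
  have hPpsd := QProof.vecMulVec_posSemidef ψ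
  have h1P := QProof.one_sub_vecMulVec_posSemidef ψ hψ
  -- rewrite the sum
  have hsum : (∑ j : Fin (2^c),
      if traceDist (((measProb W j : ℝ) : ℂ)⁻¹ • measSub W j) P ≤ ε'
        then measProb W j else 0) = ∑ j ∈ G, measProb W j := by
    rw [hG, Finset.sum_filter]
  rw [hsum]
  -- W is PSD
  have hWpsd : W.PosSemidef := by
    rw [hW, Matrix.reindex_apply]
    exact ((Matrix.posSemidef_submatrix_equiv e.symm).2 hρt.1).mul_mul_conjTranspose_same U
  -- the measurement operator M
  set M : Matrix ((Fin (2^c)) × (Fin (2^d))) ((Fin (2^c)) × (Fin (2^d))) ℂ :=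
    ∑ x ∈ G, Matrix.single x x (1:ℂ) ⊗ₖ P with hM
  have hMpsd : M.PosSemidef :=
    QProof.posSemidef_sum _ _ fun x _ =>
      QProof.kron_posSemidef (QProof.stdBasis_posSemidef x) hPpsd
  have h1Mpsd : ((1 : Matrix ((Fin (2^c)) × (Fin (2^d))) ((Fin (2^c)) × (Fin (2^d))) ℂ)
      - M).PosSemidef := by
    have hksub : ∀ x : Fin (2^c), Matrix.single x x (1:ℂ) ⊗ₖ
        ((1 : Matrix (Fin (2^d)) (Fin (2^d)) ℂ) - P)
        = Matrix.single x x (1:ℂ) ⊗ₖ (1 : Matrix (Fin (2^d)) (Fin (2^d)) ℂ)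
          - Matrix.single x x (1:ℂ) ⊗ₖ P := fun x => by
      ext ⟨i, j⟩ ⟨k, l⟩
      simp [Matrix.kroneckerMap_apply, Matrix.sub_apply, mul_sub]
    have hsplit : (1 : Matrix ((Fin (2^c)) × (Fin (2^d))) ((Fin (2^c)) × (Fin (2^d))) ℂ) - M
        = (∑ x ∈ G, Matrix.single x x (1:ℂ) ⊗ₖ
            ((1 : Matrix (Fin (2^d)) (Fin (2^d)) ℂ) - P))
          + ∑ x ∈ Gᶜ, Matrix.single x x (1:ℂ) ⊗ₖ
            (1 : Matrix (Fin (2^d)) (Fin (2^d)) ℂ) := by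
      have h1 : (1 : Matrix ((Fin (2^c)) × (Fin (2^d))) ((Fin (2^c)) × (Fin (2^d))) ℂ)
          = ∑ x : Fin (2^c), Matrix.single x x (1:ℂ) ⊗ₖ
            (1 : Matrix (Fin (2^d)) (Fin (2^d)) ℂ) := QProof.sum_std_kron_one.symm
      rw [h1, ← Finset.sum_add_sum_compl G (fun x => Matrix.single x x (1:ℂ) ⊗ₖ
        (1 : Matrix (Fin (2^d)) (Fin (2^d)) ℂ))]
      rw [hM, Finset.sum_congr rfl fun x _ => hksub x, Finset.sum_sub_distrib]
      abel
    rw [hsplit]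
    refine Matrix.PosSemidef.add ?_ ?_
    · exact QProof.posSemidef_sum _ _ fun x _ =>
        QProof.kron_posSemidef (QProof.stdBasis_posSemidef x) h1P
    · exact QProof.posSemidef_sum _ _ fun x _ =>
        QProof.kron_posSemidef (QProof.stdBasis_posSemidef x) Matrix.PosSemidef.one
  -- step C: per-j bound, summed
  have hstepC : (∑ j ∈ G, measProb W j) * (1 - 2 * ε')
      ≤ ∑ j ∈ G, (((measSub W j) * P).trace).re := by
    rw [Finset.sum_mul]
    refine Finset.sum_le_sum fun j hj => ?_
    have hcond := (Finset.mem_filter.1 (hG ▸ hj)).2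
    exact QProof.good_bound (measSub W j) (QProof.measSub_posSemidef hWpsd j) ψ hψ ε' hcond
  -- step D: trace identity
  have hstepD : (∑ j ∈ G, (((measSub W j) * P).trace).re) = ((W * M).trace).re := by
    rw [hM, Finset.mul_sum, Matrix.trace_sum, Complex.re_sum]
    exact (Finset.sum_congr rfl fun x _ => by rw [QProof.trace_mul_kron_std]).symm
  -- the ideal state
  set S := U * (Matrix.reindex e e (inputState a b)) * Uᴴ with hS
  have hSpsd : S.PosSemidef := by
    rw [hS, Matrix.reindex_apply]
    exact ((Matrix.posSemidef_submatrix_equiv e.symm).2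
      (QProof.inputState_posSemidef a b)).mul_mul_conjTranspose_same U
  -- step G : closeness
  have hstepG : ((W * M).trace).re ≤ ((S * M).trace).re + 2 * ε := by
    have hdiff : W - S = U * ((ρt - inputState a b).submatrix e.symm e.symm) * Uᴴ := by
      rw [hW, hS, Matrix.reindex_apply, Matrix.reindex_apply]
      have : (ρt - inputState a b).submatrix e.symm e.symm
          = ρt.submatrix e.symm e.symm - (inputState a b).submatrix e.symm e.symm := by
        ext p q; simp [Matrix.sub_apply]
      rw [this, Matrix.mul_sub, Matrix.sub_mul]
    have htn : traceNorm (W - S) ≤ 2 * ε := by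
      rw [hdiff, QProof.traceNorm_conj_unitary _ hU, QProof.traceNorm_submatrix _ e.symm]
      have : traceDist ρt (inputState a b) = traceNorm (ρt - inputState a b) / 2 := rfl
      rw [this] at hclose
      linarith
    have hherm : (W - S).IsHermitian := hWpsd.1.sub hSpsd.1
    have hb := QProof.abs_trace_re_mul_le hherm hMpsd h1Mpsd
    have h1 : ((W - S) * M).trace = (W * M).trace - (S * M).trace := by
      rw [Matrix.sub_mul, Matrix.trace_sub]
    rw [h1, Complex.sub_re] at hb
    have := (abs_le.1 (hb.trans htn)).2
    linarith
  -- step H : bound on ideal state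
  set κ : ℝ := ((2:ℝ)^b)⁻¹ with hκ
  have hstepH : ((S * M).trace).re ≤ κ * (M.trace).re := by
    have hUU' : U * Uᴴ = 1 := by
      have := Matrix.mem_unitaryGroup_iff.1 hU
      rwa [Matrix.star_eq_conjTranspose] at this
    have hbig : (((κ : ℂ)) • (1 : Matrix ((Fin (2^c)) × (Fin (2^d)))
        ((Fin (2^c)) × (Fin (2^d))) ℂ) - S).PosSemidef := by
      have heq : ((κ : ℂ)) • (1 : Matrix ((Fin (2^c)) × (Fin (2^d)))
          ((Fin (2^c)) × (Fin (2^d))) ℂ) - S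
          = U * ((((κ : ℂ)) • 1 - inputState a b).submatrix e.symm e.symm) * Uᴴ := by
        have hsub : (((κ : ℂ)) • 1 - inputState a b).submatrix e.symm e.symm
            = ((κ : ℂ)) • (1 : Matrix ((Fin (2^c)) × (Fin (2^d)))
              ((Fin (2^c)) × (Fin (2^d))) ℂ) - (inputState a b).submatrix e.symm e.symm := by
          ext p q
          simp [Matrix.sub_apply, Matrix.smul_apply, Matrix.one_apply, Equiv.symm_apply_eq]
        rw [hsub, Matrix.mul_sub, Matrix.sub_mul, hS, Matrix.reindex_apply]
        congr 1
        rw [Matrix.mul_smul, Matrix.smul_mul, Matrix.mul_one, hUU']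
      rw [heq]
      exact ((Matrix.posSemidef_submatrix_equiv e.symm).2
        (QProof.inputState_bound a b)).mul_mul_conjTranspose_same U
    have h0 := QProof.trace_re_mul_nonneg hbig hMpsd
    have hexp : ((((κ : ℂ)) • (1 : Matrix ((Fin (2^c)) × (Fin (2^d)))
        ((Fin (2^c)) × (Fin (2^d))) ℂ) - S) * M).trace
        = (κ : ℂ) * M.trace - (S * M).trace := by
      rw [Matrix.sub_mul, Matrix.smul_mul, Matrix.one_mul, Matrix.trace_sub, Matrix.trace_smul,
        smul_eq_mul]
    rw [hexp, Complex.sub_re, Complex.re_ofReal_mul] at h0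
    linarith
  -- step I : trace of M
  have hstepI : (M.trace).re = (G.card : ℝ) := by
    rw [hM, Matrix.trace_sum]
    have : ∀ x ∈ G, (Matrix.single x x (1:ℂ) ⊗ₖ P).trace = 1 := fun x _ => by
      rw [Matrix.trace_kronecker, QProof.trace_stdBasis, hPdef, QProof.trace_vecMulVec, hψ]
      simp
    rw [Finset.sum_congr rfl this]
    simp
  have hcard : (G.card : ℝ) ≤ 2^c := by
    have := Finset.card_le_univ G
    calc (G.card : ℝ) ≤ (Fintype.card (Fin (2^c)) : ℝ) := by exact_mod_cast this
      _ = 2^c := by simp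
  -- final arithmetic
  have hpow : κ * (2:ℝ)^c = (2:ℝ)^((a:ℤ) - d) := by
    have hcb : (a : ℤ) - d = (c : ℤ) - b := by omega
    rw [hcb, hκ, zpow_sub₀ (two_ne_zero), zpow_natCast, zpow_natCast]
    ring
  have hκpos : 0 ≤ κ := by positivity
  have hfinal : (∑ j ∈ G, measProb W j) * (1 - 2 * ε') ≤ (2:ℝ)^((a:ℤ) - d) + 2 * ε := by
    have h5 : κ * (M.trace).re ≤ (2:ℝ)^((a:ℤ) - d) := by
      rw [hstepI, ← hpow]
      exact mul_le_mul_of_nonneg_left hcard hκpos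
    linarith [hstepC, hstepD.le, hstepG, hstepH]
  have hden : 0 < 1 - 2 * ε' := by linarith
  rw [le_div_iff₀ hden]
  exact hfinal

end
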